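/- Let M be a Garside monoid, G a group, and ι : M → G an injective monoid homomorphism such that every element of G equals ι(a)⁻¹·ι(b) for some a, b ∈ M. Then the centre of G equals the set { ι(a)⁻¹·ι(b) : a, b ∈ Z(M) }, where Z(M) is the centre of the monoid M; that is, the centre of the group of fractions of M is the group of fractions of the centre of M. -/

import Mathlib

/-- `a` left-divides `b`. -/
def LeftDvd {M : Type*} [Monoid M] (a b : M) : Prop := ∃ c, b = a * c

/-- `a` right-divides `b`. -/
def GRightDvd {M : Type*} [Monoid M] (a b : M) : Prop := ∃ c, b = c * a

/-- `c` is a right lcm of `a` and `b` (least common upper bound for left-divisibility). -/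
def IsRightLcm {M : Type*} [Monoid M] (a b c : M) : Prop :=
  LeftDvd a c ∧ LeftDvd b c ∧ ∀ d, LeftDvd a d → LeftDvd b d → LeftDvd c d

/-- `c` is a left lcm of `a` and `b` (least common upper bound for right-divisibility). -/
def IsLeftLcm {M : Type*} [Monoid M] (a b c : M) : Prop :=
  GRightDvd a c ∧ GRightDvd b c ∧ ∀ d, GRightDvd a d → GRightDvd b d → GRightDvd c d

/-- `Δ` is a Garside element: its left-divisors coincide with its right-divisors,
they form a finite set, and this set generates `M`. -/
def IsGarsideElement {M : Type*} [Monoid M] (Δ : M) : Prop :=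
  {d | LeftDvd d Δ} = {d | GRightDvd d Δ} ∧
  {d | LeftDvd d Δ}.Finite ∧
  Submonoid.closure {d | LeftDvd d Δ} = ⊤

/-- A Garside monoid: cancellative, conical, atomic, with right and left lcms,
admitting a Garside element. -/
structure IsGarsideMonoid (M : Type*) [Monoid M] : Prop where
  mul_left_cancel : ∀ a b c : M, a * b = a * c → b = c
  mul_right_cancel : ∀ a b c : M, b * a = c * a → b = c
  conical : ∀ a : M, IsUnit a → a = 1
  atomic : ∃ ν : M → ℕ, (∀ a : M, a ≠ 1 → 0 < ν a) ∧ ∀ a b : M, ν a + ν b ≤ ν (a * b)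
  right_lcm : ∀ a b : M, ∃ c, IsRightLcm a b c
  left_lcm : ∀ a b : M, ∃ c, IsLeftLcm a b c
  garside : ∃ Δ : M, IsGarsideElement Δ

/-- A Garside structure on a group `G`: a Garside monoid together with an embedding
into `G` realizing `G` as its group of (left) fractions. -/
structure GarsideStructure (G : Type u) [Group G] where
  M : Type u
  [instM : Monoid M]
  garside : IsGarsideMonoid M
  ι : M →* G
  inj : Function.Injective ι
  frac : ∀ g : G, ∃ a b : M, g = (ι a)⁻¹ * ι b

/-- A group is Garside if it is the group of fractions of some Garside monoid. -/
def IsGarsideGroup (G : Type u) [Group G] : Prop := Nonempty (GarsideStructure G)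

lemma exists_central_power {M : Type*} [Monoid M]
    (hrc : ∀ a b c : M, b * a = c * a → b = c)
    (hlc : ∀ a b c : M, a * b = a * c → b = c)
    (Δ : M) (hG : IsGarsideElement Δ) :
    ∃ δ : M, (∀ x : M, δ * x = x * δ) ∧ ∀ a : M, ∃ c t, δ ^ t = a * c := by
  obtain ⟨hset, hfin, hgen⟩ := hG
  set s := {d : M | LeftDvd d Δ} with hs
  haveI : Fintype s := hfin.fintype
  have hmem : ∀ d : s, ∃ c : M, Δ = (d : M) * c ∧ c ∈ s := by
    intro d
    obtain ⟨c, hc⟩ := d.2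
    exact ⟨c, hc, by show c ∈ s; rw [hset]; exact ⟨d, hc⟩⟩
  choose del hdel hdelmem using hmem
  let D : s → s := fun d => ⟨del d, hdelmem d⟩
  have hD : ∀ d : s, Δ = (d : M) * (D d : M) := hdel
  have hDinj : Function.Injective D := by
    intro d e h
    have h2 : (d : M) * (D d : M) = (e : M) * (D e : M) := by rw [← hD, ← hD]
    rw [h] at h2
    exact Subtype.ext (hrc _ _ _ h2)
  haveI : Finite s := hfin
  have hDbij := Finite.injective_iff_bijective.mp hDinj
  let e : Equiv.Perm s := Equiv.ofBijective D hDbij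
  have he : ∀ d : s, e d = D d := fun d => rfl
  have hkey : ∀ d : s, (d : M) * Δ = Δ * ((e * e) d : M) := by
    intro d
    have h1 := hD d
    have h2 := hD (D d)
    calc (d : M) * Δ = (d : M) * ((D d : M) * (D (D d) : M)) := by rw [← h2]
    _ = Δ * (D (D d) : M) := by rw [← mul_assoc, ← h1]
    _ = Δ * ((e * e) d : M) := by rw [Equiv.Perm.mul_apply, he, he]
  have hiter : ∀ (n : ℕ) (d : s), (d : M) * Δ ^ n = Δ ^ n * (((e * e) ^ n) d : M) := by
    intro n
    induction n with
    | zero => intro d; simp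
    | succ n ih =>
      intro d
      calc (d : M) * Δ ^ (n + 1) = ((d : M) * Δ ^ n) * Δ := by rw [pow_succ, mul_assoc]
      _ = Δ ^ n * ((((e * e) ^ n) d : M) * Δ) := by rw [ih d, mul_assoc]
      _ = Δ ^ n * (Δ * (((e * e) (((e * e) ^ n) d)) : M)) := by rw [hkey]
      _ = Δ ^ (n + 1) * ((((e * e) ^ (n + 1)) d : M)) := by
          rw [← mul_assoc, ← pow_succ]
          congr 2
          simp [pow_succ', Equiv.Perm.mul_apply]
  obtain ⟨k, hkpos, hkone⟩ : ∃ k, 0 < k ∧ (e * e) ^ k = 1 :=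
    ⟨orderOf (e * e), orderOf_pos (e * e), pow_orderOf_eq_one (e * e)⟩
  refine ⟨Δ ^ k, ?_, ?_⟩
  · -- Δ ^ k is central
    have hgen' : ∀ d ∈ s, d * Δ ^ k = Δ ^ k * d := by
      intro d hd
      have := hiter k ⟨d, hd⟩
      rwa [hkone, Equiv.Perm.one_apply] at this
    intro x
    have hx : x ∈ Submonoid.closure s := by rw [hgen]; exact Submonoid.mem_top x
    induction hx using Submonoid.closure_induction with
    | mem d hd => exact (hgen' d hd).symm
    | one => simp
    | mul a b _ _ ha hb => rw [← mul_assoc, ha, mul_assoc, hb, ← mul_assoc]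
  · -- every element left-divides a power of Δ ^ k
    have hcentral : ∀ d ∈ s, d * Δ ^ k = Δ ^ k * d := by
      intro d hd
      have := hiter k ⟨d, hd⟩
      rwa [hkone, Equiv.Perm.one_apply] at this
    have hcentpow : ∀ (t : ℕ) (x : M), x ∈ Submonoid.closure s → (Δ ^ k) ^ t * x = x * (Δ ^ k) ^ t := by
      intro t x hx
      induction hx using Submonoid.closure_induction with
      | mem d hd =>
        induction t with
        | zero => simp
        | succ n ih =>
          rw [pow_succ, mul_assoc, ← hcentral d hd, ← mul_assoc, ih, mul_assoc]
      | one => simp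
      | mul a b _ _ ha hb => rw [← mul_assoc, ha, mul_assoc, hb, ← mul_assoc]
    set T : Submonoid M :=
      { carrier := {a : M | ∃ c t, (Δ ^ k) ^ t = a * c}
        one_mem' := ⟨1, 0, by simp⟩
        mul_mem' := by
          rintro x y ⟨u, m, hm⟩ ⟨v, n, hn⟩
          refine ⟨v * u, m + n, ?_⟩
          have hucl : u ∈ Submonoid.closure s := by rw [hgen]; exact Submonoid.mem_top u
          calc (Δ ^ k) ^ (m + n) = (Δ ^ k) ^ m * (Δ ^ k) ^ n := pow_add _ _ _
          _ = x * u * (Δ ^ k) ^ n := by rw [hm]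
          _ = x * ((Δ ^ k) ^ n * u) := by rw [mul_assoc, ← hcentpow n u hucl]
          _ = x * (y * v * u) := by rw [hn]
          _ = x * y * (v * u) := by rw [mul_assoc, mul_assoc] } with hT
    have hsub : s ⊆ T := by
      intro d hd
      obtain ⟨k', rfl⟩ : ∃ k', k = k' + 1 := ⟨k - 1, (Nat.succ_pred_eq_of_pos hkpos).symm⟩
      obtain ⟨c, hc⟩ := hd
      exact ⟨c * Δ ^ k', 1, by rw [pow_one, pow_succ', hc, mul_assoc]⟩
    intro a
    have : a ∈ T := by
      have := Submonoid.closure_le.mpr hsub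
      rw [hgen] at this
      exact this (Submonoid.mem_top a)
    exact this

theorem center_groupOfFractions {M : Type u} [Monoid M] (hM : IsGarsideMonoid M)
    (G : Type u) [Group G] (ι : M →* G) (hinj : Function.Injective ι)
    (hfrac : ∀ g : G, ∃ a b : M, g = (ι a)⁻¹ * ι b) :
    (Subgroup.center G : Set G) =
      { g : G | ∃ a b : M, (∀ x : M, a * x = x * a) ∧ (∀ x : M, b * x = x * b) ∧
          g = (ι a)⁻¹ * ι b } := by
  have hcentG : ∀ z : M, (∀ x : M, z * x = x * z) → ι z ∈ Subgroup.center G := by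
    intro z hz
    rw [Subgroup.mem_center_iff]
    intro h
    obtain ⟨x, y, rfl⟩ := hfrac h
    have cx : Commute (ι z) (ι x) := by
      show ι z * ι x = ι x * ι z
      rw [← map_mul, ← map_mul, hz]
    have cy : Commute (ι z) (ι y) := by
      show ι z * ι y = ι y * ι z
      rw [← map_mul, ← map_mul, hz]
    exact ((cx.inv_right.mul_right cy).symm).eq
  ext g
  simp only [SetLike.mem_coe, Set.mem_setOf_eq]
  constructor
  · intro hg
    have hg' : ∀ h : G, h * g = g * h := Subgroup.mem_center_iff.mp hg
    obtain ⟨δ, hδ, hδdvd⟩ :=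
      exists_central_power hM.mul_right_cancel hM.mul_left_cancel _ hM.garside.choose_spec
    obtain ⟨a, b, hab⟩ := hfrac g
    obtain ⟨c, t, hct⟩ := hδdvd a
    have hpow' : ∀ (n : ℕ) (x : M), δ ^ n * x = x * δ ^ n := by
      intro n x
      induction n with
      | zero => simp
      | succ m ih => rw [pow_succ, mul_assoc, hδ x, ← mul_assoc, ih, mul_assoc]
    have hpow : ∀ x : M, δ ^ t * x = x * δ ^ t := hpow' t
    -- δ ^ t = c * a
    have hca : δ ^ t = c * a := by
      apply hM.mul_left_cancel a
      rw [← hpow a, hct, mul_assoc]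
    -- ι (δ ^ t) * g = ι (c * b)
    have hkey : ι (δ ^ t) * g = ι (c * b) := by
      rw [hab, hca, map_mul, map_mul, mul_assoc, mul_inv_cancel_left]
    refine ⟨δ ^ t, c * b, hpow, ?_, ?_⟩
    · intro x
      apply hinj
      have h1 : ι (δ ^ t) * ι x = ι x * ι (δ ^ t) := by
        rw [← map_mul, ← map_mul, hpow]
      calc ι (c * b * x) = ι (c * b) * ι x := map_mul _ _ _
      _ = ι (δ ^ t) * g * ι x := by rw [hkey]
      _ = ι (δ ^ t) * ι x * g := by rw [mul_assoc, ← hg' (ι x), mul_assoc]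
      _ = ι x * ι (δ ^ t) * g := by rw [h1]
      _ = ι x * ι (c * b) := by rw [mul_assoc, hkey]
      _ = ι (x * (c * b)) := (map_mul _ _ _).symm
    · rw [eq_inv_mul_iff_mul_eq, hkey]
  · rintro ⟨a, b, ha, hb, rfl⟩
    have h1 := hcentG a ha
    have h2 := hcentG b hb
    exact mul_mem (inv_mem h1) h2
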